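/- Let X be a finite abelian group and ξ_1,…,ξ_n (n ≥ 2) independent X-valued random variables with distributions μ_i. Let α_{ij} ∈ Aut(X) with α_{1j} = α_{i1} = Id for all i,j. If the linear forms L_j = Σ_{i=1}^n α_{ij} ξ_i, j = 1,…,n, are independent, then there exist a single subgroup K of X and elements x_i ∈ X such that μ_i = m_K * E_{x_i} for all i = 1,…,n (the same subgroup K for every i). -/

import Mathlib

/-- A probability distribution on a finite set, given by its mass function. -/
def IsDist {X : Type*} [Fintype X] (μ : X → ℝ) : Prop :=
  (∀ x, 0 ≤ μ x) ∧ ∑ x, μ x = 1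

/-- The characteristic function `μ̂(y) = ∑_x (x,y) μ({x})` of a distribution `μ`
on a finite abelian group `X`, where `y` is a character of `X`. -/
noncomputable def charFun {X : Type*} [AddCommGroup X] [Fintype X]
    (μ : X → ℝ) (y : AddChar X ℂ) : ℂ :=
  ∑ x, (μ x : ℂ) * y x

/-- The Haar (uniform) distribution `m_K` on a subgroup `K` of `X`. -/
noncomputable def haarDist {X : Type*} [AddCommGroup X] [Fintype X]
    (K : AddSubgroup X) : X → ℝ :=
  (K : Set X).indicator fun _ => ((Nat.card K : ℝ))⁻¹

/-- The degenerate distribution `E_{x₀}` concentrated at `x₀`. -/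
def diracDist {X : Type*} [DecidableEq X] (x₀ : X) : X → ℝ :=
  fun x => if x = x₀ then 1 else 0

/-- Convolution of two distributions on a finite abelian group. -/
noncomputable def convDist {X : Type*} [AddCommGroup X] [Fintype X]
    (μ ν : X → ℝ) : X → ℝ :=
  fun x => ∑ t, μ t * ν (x - t)

/-- `μ` is an idempotent distribution: a shift of the Haar distribution on a subgroup. -/
noncomputable def IsIdempotent {X : Type*} [AddCommGroup X] [Fintype X] [DecidableEq X]
    (μ : X → ℝ) : Prop :=
  ∃ (K : AddSubgroup X) (x₀ : X), μ = convDist (haarDist K) (diracDist x₀)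

/-- The linear forms `L_j = ∑_i A i j (ξ i)`, `j = 1,…,k`, of independent random
variables `ξ i` with distributions `μ i` are independent: the joint distribution of
`(L_1, …, L_k)` equals the product of the marginal distributions. -/
def FormsIndep {X : Type*} [AddCommGroup X] [Fintype X] [DecidableEq X] {n k : ℕ}
    (μ : Fin n → X → ℝ) (A : Fin n → Fin k → X → X) : Prop :=
  ∀ x : Fin k → X,
    (∑ t : Fin n → X, if (∀ j, ∑ i, A i j (t i) = x j) then ∏ i, μ i (t i) else 0) =
    ∏ j, ∑ t : Fin n → X, if (∑ i, A i j (t i) = x j) then ∏ i, μ i (t i) else 0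

/-- The adjoint `α̃` of an endomorphism `α` of `X`, acting on the character group:
`(α x, y) = (x, α̃ y)`. -/
noncomputable def adjChar {X : Type*} [AddCommGroup X] (α : X →+ X)
    (y : AddChar X ℂ) : AddChar X ℂ :=
  y.compAddMonoidHom α


open Real Finset

section EntropyAux

variable {S : Type*} [Fintype S] {U : Type*} [Fintype U]

noncomputable def ent (p : S → ℝ) : ℝ := ∑ s, Real.negMulLog (p s)

lemma ent_comp_equiv (e : S ≃ U) (p : U → ℝ) : ent (fun s => p (e s)) = ent p :=
  Equiv.sum_comp e (fun u => Real.negMulLog (p u))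

lemma ent_prod_mul (p : S → ℝ) (q : U → ℝ) (hq0 : ∀ u, 0 ≤ q u)
    (hp1 : ∑ s, p s = 1) (hq1 : ∑ u, q u = 1) :
    ent (fun x : S × U => p x.1 * q x.2) = ent p + ent q := by
  unfold ent
  rw [Fintype.sum_prod_type]
  have : ∀ s, ∑ u, Real.negMulLog (p s * q u)
      = Real.negMulLog (p s) + p s * ent q := by
    intro s
    simp_rw [Real.negMulLog_mul]
    rw [Finset.sum_add_distrib, ← Finset.sum_mul, hq1, one_mul, ← Finset.mul_sum]
    rfl
  simp_rw [this]
  rw [Finset.sum_add_distrib, ← Finset.sum_mul, hp1, one_mul]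
  rfl

lemma sum_pi_prod {X : Type*} [Fintype X] : ∀ (n : ℕ) (f : Fin n → X → ℝ),
    ∑ t : Fin n → X, ∏ i, f i (t i) = ∏ i, ∑ x, f i x := by
  intro n
  induction n with
  | zero => intro f; simp
  | succ n ih =>
    intro f
    rw [← Equiv.sum_comp (Fin.consEquiv (fun _ : Fin (n+1) => X))
      (fun t => ∏ i, f i (t i))]
    rw [Fintype.sum_prod_type]
    have h1 : ∀ (a : X) (r : Fin n → X),
        (∏ i, f i ((Fin.consEquiv (fun _ : Fin (n+1) => X)) (a, r) i))
        = f 0 a * ∏ i : Fin n, f i.succ (r i) := by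
      intro a r
      rw [Fin.prod_univ_succ]
      simp [Fin.consEquiv]
    simp_rw [h1]
    rw [Fin.prod_univ_succ]
    have h2 : ∀ a : X, ∑ r : Fin n → X, f 0 a * ∏ i : Fin n, f i.succ (r i)
        = f 0 a * ∏ i : Fin n, ∑ x, f i.succ x := by
      intro a; rw [← Finset.mul_sum, ih]
    simp_rw [h2]
    rw [← Finset.sum_mul]

lemma ent_pi_prod {X : Type*} [Fintype X] : ∀ (n : ℕ) (p : Fin n → X → ℝ),
    (∀ i x, 0 ≤ p i x) → (∀ i, ∑ x, p i x = 1) →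
    ent (fun t : Fin n → X => ∏ i, p i (t i)) = ∑ i, ent (p i) := by
  intro n
  induction n with
  | zero =>
    intro p _ _
    simp [ent]
  | succ n ih =>
    intro p h0 h1
    have e := Fin.consEquiv (fun _ : Fin (n+1) => X)
    rw [← ent_comp_equiv (Fin.consEquiv (fun _ : Fin (n+1) => X))
      (fun t => ∏ i, p i (t i))]
    have h1' : (fun x : X × (Fin n → X) =>
        (fun t : Fin (n+1) → X => ∏ i, p i (t i)) ((Fin.consEquiv _) x))
        = (fun x : X × (Fin n → X) => p 0 x.1 * ∏ i : Fin n, p i.succ (x.2 i)) := by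
      funext x
      show (∏ i : Fin (n+1), p i ((Fin.consEquiv fun _ => X) x i)) = _
      rw [Fin.prod_univ_succ]
      simp [Fin.consEquiv]
    rw [h1']
    rw [ent_prod_mul (p 0) (fun r : Fin n → X => ∏ i : Fin n, p i.succ (r i))
      (fun r => Finset.prod_nonneg (fun i _ => h0 i.succ (r i))) (h1 0)
      (by rw [sum_pi_prod]; exact Finset.prod_eq_one (fun i _ => h1 i.succ))]
    rw [ih (fun i => p i.succ) (fun i x => h0 i.succ x) (fun i => h1 i.succ)]
    rw [Fin.sum_univ_succ]

lemma negMulLog_sum_le {I : Type*} [Fintype I] (v : I → ℝ) (hv : ∀ i, 0 ≤ v i) :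
    Real.negMulLog (∑ i, v i) ≤ ∑ i, Real.negMulLog (v i) := by
  have hS : ∀ i, v i ≤ ∑ j, v j := fun i =>
    Finset.single_le_sum (fun j _ => hv j) (Finset.mem_univ i)
  have h1 : Real.negMulLog (∑ i, v i) = ∑ i, v i * (- Real.log (∑ j, v j)) := by
    rw [← Finset.sum_mul]; unfold Real.negMulLog; ring
  rw [h1]
  refine Finset.sum_le_sum (fun i _ => ?_)
  rcases eq_or_lt_of_le (hv i) with h | h
  · rw [← h]; simp [Real.negMulLog]
  · unfold Real.negMulLog
    have : Real.log (v i) ≤ Real.log (∑ j, v j) := Real.log_le_log h (hS i)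
    nlinarith
lemma ent_pushforward_le [DecidableEq U] (P : S → ℝ) (hP : ∀ s, 0 ≤ P s) (T : S → U) :
    ent (fun u => ∑ s, if T s = u then P s else 0) ≤ ent P := by
  unfold ent
  have h1 : ∀ u, Real.negMulLog (∑ s, if T s = u then P s else 0)
      ≤ ∑ s, (if T s = u then Real.negMulLog (P s) else 0) := by
    intro u
    refine (negMulLog_sum_le _ (fun s => ?_)).trans_eq
      (Finset.sum_congr rfl (fun s _ => ?_))
    · split <;> simp [hP s]
    · split <;> simp
  refine (Finset.sum_le_sum (fun u _ => h1 u)).trans_eq ?_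
  rw [Finset.sum_comm]
  refine Finset.sum_congr rfl (fun s _ => ?_)
  rw [Finset.sum_ite_eq]
  simp

lemma gibbs (p q : S → ℝ) (hp0 : ∀ s, 0 ≤ p s) (hq0 : ∀ s, 0 ≤ q s)
    (hp1 : ∑ s, p s = 1) (hq1 : ∑ s, q s = 1) (hsupp : ∀ s, 0 < p s → 0 < q s) :
    0 ≤ ∑ s, p s * (Real.log (p s) - Real.log (q s)) ∧
      ((∑ s, p s * (Real.log (p s) - Real.log (q s))) = 0 → p = q) := by
  set D : S → ℝ := fun s => (q s - p s) - p s * (Real.log (q s) - Real.log (p s)) with hD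
  have hDnn : ∀ s, 0 ≤ D s := by
    intro s
    rcases eq_or_lt_of_le (hp0 s) with h | h
    · simp [hD, ← h, hq0 s]
    · have hq := hsupp s h
      have hlog : Real.log (q s) - Real.log (p s) ≤ q s / p s - 1 := by
        rw [← Real.log_div (ne_of_gt hq) (ne_of_gt h)]
        exact Real.log_le_sub_one_of_pos (div_pos hq h)
      have h2 := mul_le_mul_of_nonneg_left hlog (le_of_lt h)
      have h3 : p s * (q s / p s - 1) = q s - p s := by field_simp
      simp only [hD]
      nlinarith
  have hsum : ∑ s, D s = ∑ s, p s * (Real.log (p s) - Real.log (q s)) := by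
    simp only [hD]
    rw [Finset.sum_sub_distrib, Finset.sum_sub_distrib, hp1, hq1]
    rw [sub_self, zero_sub, ← Finset.sum_neg_distrib]
    exact Finset.sum_congr rfl (fun s _ => by ring)
  constructor
  · rw [← hsum]; exact Finset.sum_nonneg (fun s _ => hDnn s)
  · intro h0
    have hDs : ∀ s ∈ Finset.univ, D s = 0 := by
      rw [← Finset.sum_eq_zero_iff_of_nonneg (fun s _ => hDnn s), hsum, h0]
    funext s
    have hds := hDs s (Finset.mem_univ s)
    rcases eq_or_lt_of_le (hp0 s) with h | h
    · have hq0' : q s = 0 := by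
        simp only [hD, ← h, sub_zero, zero_mul] at hds
        linarith
      rw [← h, hq0']
    · have hq := hsupp s h
      by_contra hne
      have hne' : q s / p s ≠ 1 := by
        intro hc
        exact hne (by field_simp at hc; linarith)
      have hlt : Real.log (q s / p s) < q s / p s - 1 :=
        Real.log_lt_sub_one_of_pos (div_pos hq h) hne'
      rw [Real.log_div (ne_of_gt hq) (ne_of_gt h)] at hlt
      have h2 := (mul_lt_mul_iff_right₀ h).mpr hlt
      have h3 : p s * (q s / p s - 1) = q s - p s := by field_simp
      simp only [hD] at hds
      nlinarith

end EntropyAux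

section MixtureAux

variable {X : Type*} [AddCommGroup X] [Fintype X]

lemma sum_sub_reindex (p : X → ℝ) (t : X) (g : ℝ → ℝ) :
    ∑ s, g (p (s - t)) = ∑ s, g (p s) :=
  Fintype.sum_equiv (Equiv.subRight t) _ _ (fun s => rfl)

lemma ent_mixture (w p lam : X → ℝ) (hw0 : ∀ t, 0 ≤ w t) (hw1 : ∑ t, w t = 1)
    (hp0 : ∀ x, 0 ≤ p x) (hp1 : ∑ x, p x = 1)
    (hmix : ∀ s, lam s = ∑ t, w t * p (s - t)) :
    ent p ≤ ent lam ∧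
      (ent lam = ent p → ∀ t, 0 < w t → ∀ s, p (s - t) = lam s) := by
  classical
  set KL : X → ℝ := fun t =>
    ∑ s, p (s - t) * (Real.log (p (s - t)) - Real.log (lam s)) with hKL
  have hlam0 : ∀ s, 0 ≤ lam s := fun s => by
    rw [hmix s]; exact Finset.sum_nonneg (fun t _ => mul_nonneg (hw0 t) (hp0 _))
  have hlamge : ∀ t s, w t * p (s - t) ≤ lam s := by
    intro t s
    rw [hmix s]
    exact Finset.single_le_sum
      (f := fun t' => w t' * p (s - t')) (fun t' _ => mul_nonneg (hw0 t') (hp0 _))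
      (Finset.mem_univ t)
  have hpt1 : ∀ t, ∑ s, p (s - t) = 1 := fun t => by
    rw [sum_sub_reindex p t (fun x => x)]; exact hp1
  have hlam1 : ∑ s, lam s = 1 := by
    simp_rw [hmix]
    rw [Finset.sum_comm]
    have : ∀ t, ∑ s, w t * p (s - t) = w t := by
      intro t; rw [← Finset.mul_sum, hpt1 t, mul_one]
    simp_rw [this]; exact hw1
  -- identity: ∑ t, w t * KL t = ent lam - ent p
  have hident : ∑ t, w t * KL t = ent lam - ent p := by
    have expand : ∀ t, w t * KL t =
        (∑ s, w t * (p (s - t) * Real.log (p (s - t))))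
          - ∑ s, (w t * p (s - t)) * Real.log (lam s) := by
      intro t
      rw [hKL]
      rw [Finset.mul_sum, ← Finset.sum_sub_distrib]
      exact Finset.sum_congr rfl (fun s _ => by ring)
    simp_rw [expand]
    rw [Finset.sum_sub_distrib]
    have part1 : ∑ t, ∑ s, w t * (p (s - t) * Real.log (p (s - t))) = - ent p := by
      have inner : ∀ t, ∑ s, w t * (p (s - t) * Real.log (p (s - t)))
          = w t * (- ent p) := by
        intro t
        rw [← Finset.mul_sum]
        congr 1
        rw [sum_sub_reindex p t (fun x => x * Real.log x)]
        unfold ent Real.negMulLog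
        rw [← Finset.sum_neg_distrib]
        exact Finset.sum_congr rfl (fun s _ => by ring)
      simp_rw [inner]
      rw [← Finset.sum_mul, hw1, one_mul]
    have part2 : ∑ t, ∑ s, (w t * p (s - t)) * Real.log (lam s) = - ent lam := by
      rw [Finset.sum_comm]
      have inner : ∀ s, ∑ t, (w t * p (s - t)) * Real.log (lam s)
          = lam s * Real.log (lam s) := by
        intro s
        rw [← Finset.sum_mul, ← hmix s]
      simp_rw [inner]
      unfold ent Real.negMulLog
      rw [← Finset.sum_neg_distrib]
      exact Finset.sum_congr rfl (fun s _ => by ring)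
    rw [part1, part2]
    ring
  have hterm : ∀ t, 0 ≤ w t * KL t := by
    intro t
    rcases eq_or_lt_of_le (hw0 t) with h | h
    · rw [← h, zero_mul]
    · refine mul_nonneg h.le ?_
      exact (gibbs (fun s => p (s - t)) lam (fun s => hp0 _) hlam0 (hpt1 t) hlam1
        (fun s hps => lt_of_lt_of_le (mul_pos h hps) (hlamge t s))).1
  constructor
  · have h0 : 0 ≤ ∑ t, w t * KL t := Finset.sum_nonneg (fun t _ => hterm t)
    rw [hident] at h0; linarith
  · intro heq t hwt
    have hz : ∑ t, w t * KL t = 0 := by rw [hident, heq, sub_self]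
    have h0 : w t * KL t = 0 :=
      (Finset.sum_eq_zero_iff_of_nonneg (fun t _ => hterm t)).mp hz t (Finset.mem_univ t)
    have hKL0 : KL t = 0 := by
      rcases mul_eq_zero.mp h0 with h | h
      · exact absurd h (ne_of_gt hwt)
      · exact h
    have := (gibbs (fun s => p (s - t)) lam (fun s => hp0 _) hlam0 (hpt1 t) hlam1
      (fun s hps => lt_of_lt_of_le (mul_pos hwt hps) (hlamge t s))).2 hKL0
    exact fun s => congrFun this s

end MixtureAux

section SplitAux

lemma sum_split_at {n : ℕ} {M : Type*} [AddCommMonoid M] (k : Fin n) (F : Fin n → M) :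
    ∑ i, F i = F k + ∑ i : {i : Fin n // i ≠ k}, F i.1 := by
  classical
  rw [← Finset.add_sum_erase _ F (Finset.mem_univ k)]
  congr 1
  exact (Finset.sum_subtype (p := fun i => i ≠ k) (Finset.univ.erase k)
    (fun i => by simp [Finset.mem_erase]) F)

lemma prod_split_at {n : ℕ} {M : Type*} [CommMonoid M] (k : Fin n) (F : Fin n → M) :
    ∏ i, F i = F k * ∏ i : {i : Fin n // i ≠ k}, F i.1 := by
  classical
  rw [← Finset.mul_prod_erase _ F (Finset.mem_univ k)]
  congr 1
  exact (Finset.prod_subtype (p := fun i => i ≠ k) (Finset.univ.erase k)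
    (fun i => by simp [Finset.mem_erase]) F)

end SplitAux

/-- Remark 1: if moreover `α_{1j} = α_{i1} = Id`, then the `μ_i` are
shifts of the Haar distribution on one and the same subgroup `K` of `X`. -/
theorem stmt12 {X : Type*} [AddCommGroup X] [Fintype X] [DecidableEq X]
    (n : ℕ) (hn : 2 ≤ n)
    (μ : Fin n → X → ℝ) (hμ : ∀ i, IsDist (μ i))
    (α : Fin n → Fin n → (X ≃+ X))
    (hα1 : ∀ j, α ⟨0, by omega⟩ j = AddEquiv.refl X)
    (hα2 : ∀ i, α i ⟨0, by omega⟩ = AddEquiv.refl X)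
    (hindep : FormsIndep μ (fun i j => ⇑(α i j))) :
    ∃ K : AddSubgroup X, ∀ i, ∃ x₀ : X,
      μ i = convDist (haarDist K) (diracDist x₀) := by
  classical
  have hμ0 : ∀ i x, 0 ≤ μ i x := fun i => (hμ i).1
  have hμ1 : ∀ i, ∑ x, μ i x = 1 := fun i => (hμ i).2
  set j1 : Fin n := ⟨0, by omega⟩ with hj1def
  have hα2' : ∀ i, α i j1 = AddEquiv.refl X := fun i => hα2 i
  -- marginal distributions of the forms
  set lam : Fin n → X → ℝ := fun j x =>
    ∑ t : Fin n → X, if (∑ i, (α i j) (t i)) = x then ∏ i, μ i (t i) else 0 with hlam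
  have hlam0 : ∀ j x, 0 ≤ lam j x := by
    intro j x
    refine Finset.sum_nonneg (fun t _ => ?_)
    split
    · exact Finset.prod_nonneg (fun i _ => hμ0 i (t i))
    · exact le_rfl
  have hlam1 : ∀ j, ∑ x, lam j x = 1 := by
    intro j
    simp only [hlam]
    rw [Finset.sum_comm]
    have h1 : ∀ t : Fin n → X,
        (∑ x, if (∑ i, (α i j) (t i)) = x then ∏ i, μ i (t i) else 0)
        = ∏ i, μ i (t i) := by
      intro t; rw [Finset.sum_ite_eq]; simp
    simp_rw [h1]
    rw [sum_pi_prod n (fun i x => μ i x)]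
    exact Finset.prod_eq_one (fun i _ => hμ1 i)
  -- the mixture weights: law of the form j with variable k removed
  set w : Fin n → Fin n → X → ℝ := fun k j u =>
    ∑ r : {i : Fin n // i ≠ k} → X,
      if (∑ i, (α i.1 j) (r i)) = u then ∏ i, μ i.1 (r i) else 0 with hw
  have hw0 : ∀ k j u, 0 ≤ w k j u := by
    intro k j u
    refine Finset.sum_nonneg (fun r _ => ?_)
    split
    · exact Finset.prod_nonneg (fun i _ => hμ0 i.1 (r i))
    · exact le_rfl
  -- decomposition of lam j as a mixture of translates of μ k ∘ (α k j).symm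
  have hdecomp : ∀ k j s, lam j s = ∑ u, w k j u * μ k ((α k j).symm (s - u)) := by
    intro k j s
    have hrhs : ∑ u, w k j u * μ k ((α k j).symm (s - u))
        = ∑ r : {i : Fin n // i ≠ k} → X,
            (∏ i, μ i.1 (r i)) *
              μ k ((α k j).symm (s - ∑ i, (α i.1 j) (r i))) := by
      simp only [hw]
      simp_rw [Finset.sum_mul]
      rw [Finset.sum_comm]
      refine Finset.sum_congr rfl (fun r _ => ?_)
      simp_rw [ite_mul, zero_mul]
      rw [Finset.sum_ite_eq]
      simp
    rw [hrhs]
    simp only [hlam]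
    rw [← Equiv.sum_comp (Equiv.funSplitAt k X).symm
      (fun t : Fin n → X => if (∑ i, (α i j) (t i)) = s then ∏ i, μ i (t i) else 0)]
    rw [Fintype.sum_prod_type]
    have hv1 : ∀ (a : X) (r : {i : Fin n // i ≠ k} → X),
        ((Equiv.funSplitAt k X).symm (a, r)) k = a := by
      intro a r; simp
    have hv2 : ∀ (a : X) (r : {i : Fin n // i ≠ k} → X) (i : {i : Fin n // i ≠ k}),
        ((Equiv.funSplitAt k X).symm (a, r)) i.1 = r i := by
      intro a r i
      rcases i with ⟨i, hi⟩
      simp [hi]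
    have hsum : ∀ (a : X) (r : {i : Fin n // i ≠ k} → X),
        (∑ i, (α i j) (((Equiv.funSplitAt k X).symm (a, r)) i))
          = (α k j) a + ∑ i : {i : Fin n // i ≠ k}, (α i.1 j) (r i) := by
      intro a r
      rw [sum_split_at k (fun i => (α i j) (((Equiv.funSplitAt k X).symm (a, r)) i))]
      rw [hv1 a r]
      congr 1
      exact Finset.sum_congr rfl (fun i _ => by rw [hv2 a r i])
    have hprod : ∀ (a : X) (r : {i : Fin n // i ≠ k} → X),
        (∏ i, μ i (((Equiv.funSplitAt k X).symm (a, r)) i))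
          = μ k a * ∏ i : {i : Fin n // i ≠ k}, μ i.1 (r i) := by
      intro a r
      rw [prod_split_at k (fun i => μ i (((Equiv.funSplitAt k X).symm (a, r)) i))]
      rw [hv1 a r]
      congr 1
      exact Finset.prod_congr rfl (fun i _ => by rw [hv2 a r i])
    have hmain : ∀ (a : X) (r : {i : Fin n // i ≠ k} → X),
        (if (∑ i, (α i j) (((Equiv.funSplitAt k X).symm (a, r)) i)) = s
          then ∏ i, μ i (((Equiv.funSplitAt k X).symm (a, r)) i) else 0)
        = (if a = (α k j).symm (s - ∑ i : {i : Fin n // i ≠ k}, (α i.1 j) (r i))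
          then μ k a * ∏ i : {i : Fin n // i ≠ k}, μ i.1 (r i) else 0) := by
      intro a r
      rw [hsum a r, hprod a r]
      refine if_congr ?_ rfl rfl
      rw [← eq_sub_iff_add_eq]
      constructor
      · intro h; rw [← h]; simp
      · intro h; rw [h]; simp
    simp_rw [hmain]
    rw [Finset.sum_comm]
    refine Finset.sum_congr rfl (fun r _ => ?_)
    rw [Finset.sum_ite_eq']
    simp [mul_comm]
  -- weights sum to one
  have hwsum : ∀ k j, ∑ u, w k j u = 1 := by
    intro k j
    have h1 : ∀ u, ∑ s, μ k ((α k j).symm (s - u)) = 1 := by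
      intro u
      rw [sum_sub_reindex (fun x => μ k ((α k j).symm x)) u (fun x => x)]
      rw [← hμ1 k]
      exact Fintype.sum_equiv (α k j).symm.toEquiv _ _ (fun x => rfl)
    have h2 : ∑ s, lam j s = ∑ u, w k j u := by
      simp_rw [hdecomp k j]
      rw [Finset.sum_comm]
      refine Finset.sum_congr rfl (fun u _ => ?_)
      rw [← Finset.mul_sum, h1 u, mul_one]
    rw [← h2, hlam1 j]
  -- entropy comparison: ent (μ k) ≤ ent (lam j) for all j k
  have hent_ge : ∀ j k, ent (μ k) ≤ ent (lam j) := by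
    intro j k
    have hp1' : ∑ x, μ k ((α k j).symm x) = 1 := by
      rw [← hμ1 k]
      exact Fintype.sum_equiv (α k j).symm.toEquiv _ _ (fun x => rfl)
    have H := (ent_mixture (w k j) (fun x => μ k ((α k j).symm x)) (lam j)
      (hw0 k j) (hwsum k j) (fun x => hμ0 k _) hp1' (fun s => hdecomp k j s)).1
    have hbase : ent (fun x => μ k ((α k j).symm x)) = ent (μ k) :=
      ent_comp_equiv (α k j).symm.toEquiv (μ k)
    rw [hbase] at H
    exact H
  -- pushforward inequality: ent of joint ≤ ∑ ent μ
  have hJ : ent (fun x : Fin n → X => ∏ j, lam j (x j)) ≤ ∑ i, ent (μ i) := by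
    have hTform : (fun x : Fin n → X => ∏ j, lam j (x j))
        = (fun x : Fin n → X => ∑ t : Fin n → X,
            if (fun j => ∑ i, (α i j) (t i)) = x then ∏ i, μ i (t i) else 0) := by
      funext x
      have h1 := hindep x
      dsimp only at h1
      simp only [hlam]
      rw [← h1]
      exact Finset.sum_congr rfl (fun t _ => if_congr funext_iff.symm rfl rfl)
    rw [hTform]
    refine (ent_pushforward_le (fun t : Fin n → X => ∏ i, μ i (t i))
      (fun t => Finset.prod_nonneg (fun i _ => hμ0 i (t i)))
      (fun t => fun j => ∑ i, (α i j) (t i))).trans_eq ?_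
    exact ent_pi_prod n μ hμ0 hμ1
  -- the entropy chain and equalities
  have hEntJ : ent (fun x : Fin n → X => ∏ j, lam j (x j)) = ∑ j, ent (lam j) :=
    ent_pi_prod n lam hlam0 hlam1
  have hle1 : ∑ j, ent (lam j) ≤ ∑ i, ent (μ i) := by rw [← hEntJ]; exact hJ
  have hle2 : ∑ i, ent (μ i) ≤ ∑ j, ent (lam j) :=
    Finset.sum_le_sum (fun i _ => hent_ge i i)
  have heach : ∀ j, ent (lam j) = ent (μ j) := by
    have h0 : ∑ j, (ent (lam j) - ent (μ j)) = 0 := by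
      rw [Finset.sum_sub_distrib]; linarith
    intro j
    have := (Finset.sum_eq_zero_iff_of_nonneg
      (fun j _ => sub_nonneg.mpr (hent_ge j j))).mp h0 j (Finset.mem_univ j)
    linarith
  have hkey : ∀ k, ent (lam j1) = ent (μ k) := by
    intro k
    have h1 := hent_ge j1 k
    have h2 := hent_ge k j1
    have h3 := heach j1
    have h4 := heach k
    linarith
  -- equality case: each μ k is a translate of lam j1
  have hstar : ∀ k u, 0 < w k j1 u → ∀ s, μ k (s - u) = lam j1 s := by
    intro k
    have hmix' : ∀ s, lam j1 s = ∑ u, w k j1 u * μ k (s - u) := by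
      intro s
      rw [hdecomp k j1 s]
      refine Finset.sum_congr rfl (fun u _ => ?_)
      rw [hα2' k]
      simp
    have H := (ent_mixture (w k j1) (μ k) (lam j1)
      (hw0 k j1) (hwsum k j1) (hμ0 k) (hμ1 k) hmix').2 (hkey k)
    exact fun u hu s => H u hu s
  -- choose support points
  have hsupp_ex : ∀ i, ∃ a, 0 < μ i a := by
    intro i
    by_contra h
    push_neg at h
    have h0 : ∑ x, μ i x = 0 :=
      Finset.sum_eq_zero (fun x _ => le_antisymm (h x) (hμ0 i x))
    rw [hμ1 i] at h0
    norm_num at h0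
  choose A hA using hsupp_ex
  -- the period subgroup of lam j1
  set lam1 : X → ℝ := lam j1 with hlam1def
  set K : AddSubgroup X :=
    { carrier := {x | ∀ s, lam1 (s + x) = lam1 s}
      zero_mem' := by intro s; rw [add_zero]
      add_mem' := by
        intro a b ha hb s
        have h1 : s + (a + b) = (s + a) + b := by abel
        rw [h1, hb (s + a), ha s]
      neg_mem' := by
        intro a ha s
        have h1 := ha (s + -a)
        have h2 : s + -a + a = s := by abel
        rw [h2] at h1
        exact h1.symm } with hK
  have hKmem : ∀ x : X, x ∈ K ↔ ∀ s, lam1 (s + x) = lam1 s := fun x => Iff.rfl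
  -- positivity of weights at product configurations
  have hwpos : ∀ (k : Fin n) (c : {i : Fin n // i ≠ k} → X),
      (∀ i, 0 < μ i.1 (c i)) → 0 < w k j1 (∑ i, c i) := by
    intro k c hc
    have hcond : (∑ i : {i : Fin n // i ≠ k}, (α i.1 j1) (c i)) = ∑ i, c i := by
      refine Finset.sum_congr rfl (fun i _ => ?_)
      rw [hα2' i.1]
      rfl
    have h1 : (if (∑ i : {i : Fin n // i ≠ k}, (α i.1 j1) (c i)) = (∑ i, c i)
        then ∏ i, μ i.1 (c i) else 0) = ∏ i, μ i.1 (c i) := if_pos hcond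
    have h2 := Finset.single_le_sum
      (f := fun r : {i : Fin n // i ≠ k} → X =>
        if (∑ i, (α i.1 j1) (r i)) = (∑ i, c i) then ∏ i, μ i.1 (r i) else 0)
      (fun r _ => by
        try dsimp only
        split
        · exact Finset.prod_nonneg (fun i _ => hμ0 i.1 (r i))
        · exact le_rfl)
      (Finset.mem_univ c)
    try dsimp only at h2
    rw [h1] at h2
    calc (0:ℝ) < ∏ i, μ i.1 (c i) := Finset.prod_pos (fun i _ => hc i)
    _ ≤ w k j1 (∑ i, c i) := h2
  -- differences of positive-weight points are periods
  have hper : ∀ (k : Fin n) (u u' : X), 0 < w k j1 u → 0 < w k j1 u' →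
      (u - u') ∈ K := by
    intro k u u' hu hu'
    rw [hKmem]
    intro s
    have h1 := hstar k u hu (s + (u - u'))
    have h2 := hstar k u' hu' s
    rw [← h1, ← h2]
    congr 1
    abel
  -- supports of μ i lie in A i + K
  have hsuppK : ∀ i x, 0 < μ i x → x - A i ∈ K := by
    intro i x hx
    have hex : ∃ k : Fin n, k ≠ i := by
      by_cases h : (i : ℕ) = 0
      · refine ⟨⟨1, by omega⟩, fun hc => ?_⟩
        rw [Fin.ext_iff] at hc
        simp at hc
        omega
      · refine ⟨⟨0, by omega⟩, fun hc => ?_⟩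
        rw [Fin.ext_iff] at hc
        simp at hc
        omega
    obtain ⟨k, hk⟩ := hex
    set c1 : {i' : Fin n // i' ≠ k} → X := fun i' => if i'.1 = i then x else A i'.1 with hc1
    set c2 : {i' : Fin n // i' ≠ k} → X := fun i' => A i'.1 with hc2
    have h1 : 0 < w k j1 (∑ i', c1 i') := by
      refine hwpos k c1 (fun i' => ?_)
      by_cases h : i'.1 = i
      · simp only [hc1, if_pos h, h]; exact h ▸ hx
      · simp only [hc1, if_neg h]; exact hA i'.1
    have h2 : 0 < w k j1 (∑ i', c2 i') := hwpos k c2 (fun i' => hA i'.1)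
    have hdiff : (∑ i', c1 i') - (∑ i', c2 i') = x - A i := by
      rw [← Finset.sum_sub_distrib]
      have hterm : ∀ i' : {i' : Fin n // i' ≠ k},
          c1 i' - c2 i' = if i' = (⟨i, Ne.symm hk⟩ : {i' : Fin n // i' ≠ k})
            then x - A i else 0 := by
        intro i'
        by_cases h : i'.1 = i
        · rw [if_pos (Subtype.ext h)]
          simp only [hc1, hc2, if_pos h, h]
        · rw [if_neg (fun hc => h (by rw [hc]))]
          simp only [hc1, hc2, if_neg h, sub_self]
      simp_rw [hterm]
      rw [Finset.sum_ite_eq']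
      simp
    have := hper k _ _ h1 h2
    rwa [hdiff] at this
  -- each μ i is an explicit translate of lam1
  set u0 : Fin n → X := fun i => ∑ i' : {i' : Fin n // i' ≠ i}, A i'.1 with hu0
  have htrans : ∀ i x, μ i x = lam1 (x + u0 i) := by
    intro i x
    have hpos : 0 < w i j1 (u0 i) :=
      hwpos i (fun i' => A i'.1) (fun i' => hA i'.1)
    have h1 := hstar i (u0 i) hpos (x + u0 i)
    rw [← h1]
    congr 1
    abel
  set b : X := ∑ i', A i' with hb
  have hbsplit : ∀ i, A i + u0 i = b := fun i => (sum_split_at i A).symm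
  -- value on the coset
  have hcoset : ∀ i x, x - A i ∈ K → μ i x = lam1 b := by
    intro i x hxK
    rw [htrans i x]
    have h1 : x + u0 i = b + (x - A i) := by rw [← hbsplit i]; abel
    rw [h1]
    exact (hKmem _).mp hxK b
  have hzero : ∀ i x, x - A i ∉ K → μ i x = 0 := by
    intro i x hxK
    by_contra h
    exact hxK (hsuppK i x (lt_of_le_of_ne (hμ0 i x) (Ne.symm h)))
  -- cardinality of cosets
  have hcard : ∀ z : X, (Finset.univ.filter (fun x => x - z ∈ K)).card = Nat.card K := by
    intro z
    rw [Nat.card_eq_fintype_card, Fintype.card_subtype]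
    refine Finset.card_bij (fun x _ => x - z) ?_ ?_ ?_
    · intro x hx
      simp only [Finset.mem_filter, Finset.mem_univ, true_and] at hx ⊢
      exact hx
    · intro x hx y hy hxy
      have hxy' : x - z = y - z := hxy
      have h2 : x - z + z = y - z + z := by rw [hxy']
      simpa using h2
    · intro y hy
      simp only [Finset.mem_filter, Finset.mem_univ, true_and] at hy
      refine ⟨y + z, ?_, ?_⟩
      · simp only [Finset.mem_filter, Finset.mem_univ, true_and, add_sub_cancel_right]
        exact hy
      · show y + z - z = y
        abel
  -- the constant value
  have hone : lam1 b * (Nat.card K : ℝ) = 1 := by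
    have h1 : ∑ x, μ j1 x = ∑ x, (if x - A j1 ∈ K then lam1 b else 0) := by
      refine Finset.sum_congr rfl (fun x _ => ?_)
      by_cases h : x - A j1 ∈ K
      · rw [if_pos h, hcoset j1 x h]
      · rw [if_neg h, hzero j1 x h]
    rw [hμ1 j1] at h1
    rw [← Finset.sum_filter, Finset.sum_const, nsmul_eq_mul, hcard (A j1)] at h1
    rw [mul_comm] at h1
    exact h1.symm
  have hcK0 : (Nat.card K : ℝ) ≠ 0 := by
    intro h
    rw [h, mul_zero] at hone
    norm_num at hone
  have hlamb : lam1 b = ((Nat.card K : ℝ))⁻¹ := by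
    rw [← one_div]
    exact eq_one_div_of_mul_eq_one_right (by rw [mul_comm] at hone; exact hone)
  -- conclusion
  refine ⟨K, fun i => ⟨A i, ?_⟩⟩
  funext x
  have hconv : convDist (haarDist K) (diracDist (A i)) x = haarDist K (x - A i) := by
    unfold convDist diracDist
    have h1 : ∀ t : X, haarDist K t * (if x - t = A i then (1:ℝ) else 0)
        = if t = x - A i then haarDist K t else 0 := by
      intro t
      by_cases h : x - t = A i
      · rw [if_pos h, if_pos (by rw [← h]; abel), mul_one]
      · rw [if_neg h, if_neg (fun hc => h (by rw [hc]; abel)), mul_zero]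
    simp_rw [h1]
    rw [Finset.sum_ite_eq']
    simp
  rw [hconv]
  unfold haarDist
  by_cases h : x - A i ∈ K
  · rw [Set.indicator_of_mem (by exact h)]
    rw [hcoset i x h, hlamb]
  · rw [Set.indicator_of_notMem (by exact h)]
    exact hzero i x h
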